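/- For all integers k ≥ 1 and n ≥ 1, the counts of peakless Motzkin paths ending at a given level satisfy the linear recursion m(n+1, k) = m(n, k−1) + m(n, k) + m(n, k+1) − m(n−1, k). -/

import Mathlib

/-- Steps of a Motzkin path: up, down, flat. -/
inductive Step : Type
  | U : Step
  | D : Step
  | F : Step
  deriving DecidableEq

instance : Fintype Step :=
  ⟨{Step.U, Step.D, Step.F}, by intro x; cases x <;> simp⟩

/-- The value (vertical displacement) of a step. -/
def Step.val : Step → ℤ
  | .U => 1
  | .D => -1
  | .F => 0

/-- The partial sum of the first `i` step values of the word `w`. -/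
def psum {n : ℕ} (w : Fin n → Step) (i : ℕ) : ℤ :=
  ∑ j : Fin n, if (j : ℕ) < i then (w j).val else 0

/-- A word is peakless if no up-step is immediately followed by a down-step. -/
def Peakless {n : ℕ} (w : Fin n → Step) : Prop :=
  ∀ i : ℕ, ∀ h : i + 1 < n,
    ¬(w ⟨i, Nat.lt_of_succ_lt h⟩ = Step.U ∧ w ⟨i + 1, h⟩ = Step.D)

/-- `w` is a peakless Motzkin path from level `0` to level `k`:
all partial sums are nonnegative, the total sum is `k`, and there is no peak. -/
def IsPeaklessMotzkinTo {n : ℕ} (w : Fin n → Step) (k : ℤ) : Prop :=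
  (∀ i : ℕ, 0 ≤ psum w i) ∧ psum w n = k ∧ Peakless w

/-- The height of a path: the maximum of its partial sums (0 for the empty path). -/
def height {n : ℕ} (w : Fin n → Step) : ℤ :=
  (Finset.range (n + 1)).sup' Finset.nonempty_range_add_one (psum w)

/-- `mTo n k`: the number of peakless Motzkin paths of length `n` from level `0` to level `k`. -/
noncomputable def mTo (n : ℕ) (k : ℤ) : ℕ :=
  Nat.card {w : Fin n → Step // IsPeaklessMotzkinTo w k}

/-- `m n`: the number of peakless Motzkin paths of length `n`. -/
noncomputable def m (n : ℕ) : ℕ := mTo n 0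

/-- `A n ℓ`: the number of peakless Motzkin paths of length `n` of height at most `ℓ`. -/
noncomputable def A (n ℓ : ℕ) : ℕ :=
  Nat.card {w : Fin n → Step // IsPeaklessMotzkinTo w 0 ∧ height w ≤ (ℓ : ℤ)}

lemma psum_snoc {n : ℕ} (v : Fin n → Step) (s : Step) (i : ℕ) :
    psum (Fin.snoc v s) i = psum v i + if n < i then s.val else 0 := by
  unfold psum
  rw [Fin.sum_univ_castSucc]
  simp only [Fin.snoc_castSucc, Fin.snoc_last, Fin.coe_castSucc, Fin.val_last]

lemma psum_stable {n : ℕ} (w : Fin n → Step) {i : ℕ} (h : n ≤ i) : psum w i = psum w n := by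
  unfold psum
  refine Finset.sum_congr rfl fun j _ => ?_
  rw [if_pos (lt_of_lt_of_le j.isLt h), if_pos j.isLt]

lemma snoc_mk_lt {n : ℕ} (v : Fin n → Step) (s : Step) {i : ℕ} (h : i < n) (h' : i < n + 1) :
    (Fin.snoc v s : Fin (n+1) → Step) ⟨i, h'⟩ = v ⟨i, h⟩ := by
  simp [Fin.snoc, h]

lemma snoc_mk_eq {n : ℕ} (v : Fin n → Step) (s : Step) (h' : n < n + 1) :
    (Fin.snoc v s : Fin (n+1) → Step) ⟨n, h'⟩ = s := by
  simp [Fin.snoc]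

lemma isPM_snoc_iff {n : ℕ} (v : Fin n → Step) (s : Step) (k : ℤ)
    (hk : 0 ≤ k - s.val) (hk0 : 0 ≤ k) :
    IsPeaklessMotzkinTo (Fin.snoc v s) k ↔
      IsPeaklessMotzkinTo v (k - s.val) ∧
        ∀ (h : 0 < n), ¬(v ⟨n - 1, by omega⟩ = Step.U ∧ s = Step.D) := by
  constructor
  · rintro ⟨hnn, htot, hpk⟩
    have htot' : psum v n = k - s.val := by
      have := htot
      rw [psum_snoc, psum_stable v (by omega : n ≤ n + 1), if_pos (by omega)] at this
      omega
    refine ⟨⟨?_, htot', ?_⟩, ?_⟩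
    · intro i
      rcases le_or_gt i n with h | h
      · have := hnn i
        rw [psum_snoc, if_neg (by omega)] at this
        omega
      · rw [psum_stable v (le_of_lt h), htot']; exact hk
    · intro i h hcon
      refine hpk i (by omega) ?_
      rw [snoc_mk_lt v s (by omega), snoc_mk_lt v s h]
      exact hcon
    · intro hn hcon
      refine hpk (n - 1) (by omega) ?_
      have e1 : (⟨n - 1 + 1, by omega⟩ : Fin (n + 1)) = ⟨n, by omega⟩ := by simp only [Fin.mk.injEq]; omega
      rw [snoc_mk_lt v s (by omega), e1, snoc_mk_eq]
      exact ⟨hcon.1, hcon.2⟩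
  · rintro ⟨⟨hnn, htot, hpk⟩, hb⟩
    refine ⟨?_, ?_, ?_⟩
    · intro i
      rw [psum_snoc]
      split
      · rw [psum_stable v (by omega)] ; omega
      · have := hnn i; omega
    · rw [psum_snoc, psum_stable v (by omega : n ≤ n + 1), if_pos (by omega), htot]; omega
    · intro i h hcon
      have hi : i + 1 ≤ n := by omega
      rcases lt_or_eq_of_le hi with h2 | h2
      · refine hpk i h2 ?_
        rw [snoc_mk_lt v s (by omega), snoc_mk_lt v s h2] at hcon
        exact hcon
      · have hn : 0 < n := by omega
        refine hb hn ?_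
        have e1 : (⟨i + 1, h⟩ : Fin (n + 1)) = ⟨n, by omega⟩ := by simp only [Fin.mk.injEq]; omega
        have e2 : (⟨i, by omega⟩ : Fin (n + 1)) = (⟨n - 1 + 0, by omega⟩ : Fin (n+1)) := by simp only [Fin.mk.injEq]; omega
        rw [e1, snoc_mk_eq] at hcon
        rw [snoc_mk_lt v s (by omega : i < n)] at hcon
        have e3 : (⟨i, by omega⟩ : Fin n) = ⟨n - 1, by omega⟩ := by simp only [Fin.mk.injEq]; omega
        rw [e3] at hcon
        exact hcon

lemma nat_card_sigma {ι : Type*} [Fintype ι] (f : ι → Type*) [∀ i, Finite (f i)] :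
    Nat.card (Σ i, f i) = ∑ i, Nat.card (f i) := by
  classical
  letI : ∀ i, Fintype (f i) := fun i => Fintype.ofFinite _
  simp [Nat.card_eq_fintype_card, Fintype.card_sigma]

def fiberEquiv (n : ℕ) (k : ℤ) (s : Step) :
    {w : {w : Fin (n + 1) → Step // IsPeaklessMotzkinTo w k} // w.1 (Fin.last n) = s} ≃
      {v : Fin n → Step // IsPeaklessMotzkinTo (Fin.snoc v s) k} where
  toFun w := ⟨Fin.init w.1.1, by
    have hw := w.1.2
    rw [← Fin.snoc_init_self w.1.1] at hw
    rwa [w.2] at hw⟩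
  invFun v := ⟨⟨Fin.snoc v.1 s, v.2⟩, by simp⟩
  left_inv := by
    rintro ⟨⟨w, hw⟩, hs⟩
    apply Subtype.ext
    apply Subtype.ext
    simp only at hs ⊢
    rw [← hs, Fin.snoc_init_self]
  right_inv := by
    rintro ⟨v, hv⟩
    apply Subtype.ext
    simp only
    exact Fin.init_snoc _ _

lemma card_snoc_split (n : ℕ) (k : ℤ) :
    mTo (n + 1) k =
        Nat.card {v : Fin n → Step // IsPeaklessMotzkinTo (Fin.snoc v Step.U) k}
      + Nat.card {v : Fin n → Step // IsPeaklessMotzkinTo (Fin.snoc v Step.D) k}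
      + Nat.card {v : Fin n → Step // IsPeaklessMotzkinTo (Fin.snoc v Step.F) k} := by
  rw [mTo, Nat.card_congr (Equiv.sigmaFiberEquiv
    (fun w : {w : Fin (n + 1) → Step // IsPeaklessMotzkinTo w k} => w.1 (Fin.last n))).symm,
    nat_card_sigma]
  have hfib : ∀ s : Step, Nat.card {w : {w : Fin (n + 1) → Step // IsPeaklessMotzkinTo w k} //
      w.1 (Fin.last n) = s} = Nat.card {v : Fin n → Step // IsPeaklessMotzkinTo (Fin.snoc v s) k} :=
    fun s => Nat.card_congr (fiberEquiv n k s)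
  simp only [hfib]
  have huniv : (Finset.univ : Finset Step) = {Step.U, Step.D, Step.F} := by decide
  rw [huniv]
  rw [Finset.sum_insert (by decide), Finset.sum_insert (by decide), Finset.sum_singleton]
  ring

lemma card_snoc_U {n : ℕ} (k : ℤ) (hk : 1 ≤ k) :
    Nat.card {v : Fin n → Step // IsPeaklessMotzkinTo (Fin.snoc v Step.U) k}
      = mTo n (k - 1) := by
  rw [mTo]
  refine Nat.card_congr (Equiv.subtypeEquivRight fun v => ?_)
  rw [isPM_snoc_iff v Step.U k (by simp [Step.val]; omega) (by omega)]
  simp [Step.val]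

lemma card_snoc_F {n : ℕ} (k : ℤ) (hk : 0 ≤ k) :
    Nat.card {v : Fin n → Step // IsPeaklessMotzkinTo (Fin.snoc v Step.F) k}
      = mTo n k := by
  rw [mTo]
  refine Nat.card_congr (Equiv.subtypeEquivRight fun v => ?_)
  rw [isPM_snoc_iff v Step.F k (by simp [Step.val]; omega) hk]
  simp [Step.val]

lemma card_snoc_D {n : ℕ} (k : ℤ) (hk : 0 ≤ k) (hn : 0 < n) :
    Nat.card {v : Fin n → Step // IsPeaklessMotzkinTo (Fin.snoc v Step.D) k}
      = Nat.card {v : Fin n → Step //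
          IsPeaklessMotzkinTo v (k + 1) ∧ v ⟨n - 1, by omega⟩ ≠ Step.U} := by
  refine Nat.card_congr (Equiv.subtypeEquivRight fun v => ?_)
  rw [isPM_snoc_iff v Step.D k (by simp [Step.val]; omega) hk,
    show k - Step.D.val = k + 1 by simp [Step.val]]
  constructor
  · rintro ⟨h1, h2⟩
    exact ⟨h1, fun hU => h2 hn ⟨hU, rfl⟩⟩
  · rintro ⟨h1, h2⟩
    exact ⟨h1, fun _ hc => h2 hc.1⟩

lemma card_split_last {α : Type*} [Finite α] (Q R : α → Prop) :
    Nat.card {a : α // Q a} =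
      Nat.card {a : α // Q a ∧ R a} + Nat.card {a : α // Q a ∧ ¬R a} := by
  classical
  rw [Nat.card_congr (Equiv.sumCompl fun a : {a : α // Q a} => R a.1).symm, Nat.card_sum]
  congr 1
  · exact Nat.card_congr ((Equiv.subtypeSubtypeEquivSubtypeInter Q R))
  · exact Nat.card_congr ((Equiv.subtypeSubtypeEquivSubtypeInter Q (fun a => ¬ R a)))

/-- paths of length m+1 to level k whose last step is U correspond to paths of length m. -/
def lastUEquiv (mm : ℕ) (k : ℤ) :
    {v : Fin (mm + 1) → Step // IsPeaklessMotzkinTo v k ∧ v ⟨mm, Nat.lt_succ_self mm⟩ = Step.U} ≃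
      {u : Fin mm → Step // IsPeaklessMotzkinTo (Fin.snoc u Step.U) k} where
  toFun v := ⟨Fin.init v.1, by
    have hw := v.2.1
    rw [← Fin.snoc_init_self v.1] at hw
    have hl : v.1 (Fin.last mm) = Step.U := v.2.2
    rwa [hl] at hw⟩
  invFun u := ⟨Fin.snoc u.1 Step.U, u.2, snoc_mk_eq u.1 Step.U (Nat.lt_succ_self mm)⟩
  left_inv := by
    rintro ⟨v, hv, hU⟩
    apply Subtype.ext
    simp only
    have : v (Fin.last mm) = Step.U := hU
    rw [← this, Fin.snoc_init_self]
  right_inv := by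
    rintro ⟨u, hu⟩
    apply Subtype.ext
    simp only
    exact Fin.init_snoc _ _


/-- For `k ≥ 1` and `n ≥ 1`, the counts of peakless Motzkin paths ending at a given level
satisfy `m(n+1, k) = m(n, k−1) + m(n, k) + m(n, k+1) − m(n−1, k)`. -/
theorem peakless_level_counts_recursion (k : ℤ) (hk : 1 ≤ k) (n : ℕ) (hn : 1 ≤ n) :
    (mTo (n + 1) k : ℤ)
      = mTo n (k - 1) + mTo n k + mTo n (k + 1) - mTo (n - 1) k := by
  obtain ⟨mm, rfl⟩ : ∃ mm, n = mm + 1 := ⟨n - 1, by omega⟩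
  have h1 : mTo (mm + 1 + 1) k =
      mTo (mm + 1) (k - 1) + Nat.card {v : Fin (mm + 1) → Step //
        IsPeaklessMotzkinTo v (k + 1) ∧ v ⟨mm, Nat.lt_succ_self mm⟩ ≠ Step.U} + mTo (mm + 1) k := by
    rw [card_snoc_split (mm + 1) k, card_snoc_U k hk, card_snoc_F k (by omega),
      card_snoc_D k (by omega) (by omega)]
    rfl
  have h2 : mTo (mm + 1) (k + 1) =
      Nat.card {v : Fin (mm + 1) → Step //
        IsPeaklessMotzkinTo v (k + 1) ∧ v ⟨mm, Nat.lt_succ_self mm⟩ = Step.U}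
      + Nat.card {v : Fin (mm + 1) → Step //
        IsPeaklessMotzkinTo v (k + 1) ∧ v ⟨mm, Nat.lt_succ_self mm⟩ ≠ Step.U} :=
    card_split_last _ _
  have h3 : Nat.card {v : Fin (mm + 1) → Step //
      IsPeaklessMotzkinTo v (k + 1) ∧ v ⟨mm, Nat.lt_succ_self mm⟩ = Step.U} = mTo mm k := by
    have hcu := card_snoc_U (n := mm) (k + 1) (by linarith : 1 ≤ k + 1)
    rw [Nat.card_congr (lastUEquiv mm (k + 1)), hcu, show k + 1 - 1 = k by ring]
  rw [h3] at h2
  clear h3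
  generalize hA : Nat.card {v : Fin (mm + 1) → Step //
      IsPeaklessMotzkinTo v (k + 1) ∧ v ⟨mm, Nat.lt_succ_self mm⟩ ≠ Step.U} = a at h1 h2
  clear hA
  have hsub : mm + 1 - 1 = mm := rfl
  rw [hsub]
  push_cast
  omega
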